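/- If λ ∈ (λ_1, λ*), then the unique Nash equilibrium s* of the homogeneous FL game Γ_FL^h satisfies s̄* < c_1, where s̄* = (1/m) Σ_{i=1}^m s*_i. -/

import Mathlib

open Finset

/-- Payoff of client `i` in the homogeneous FL game `Γ_FL^h`. -/
noncomputable def payH (m : ℕ) (lam : ℝ) (α : Fin m → ℝ) (s : Fin m → ℝ) (i : Fin m) : ℝ :=
  lam / (m : ℝ) * (∑ j, s j) * s i - α i * (s i) ^ 2

/-- Nash equilibrium of the homogeneous FL game `Γ_FL^h`. -/
def isNE (m : ℕ) (lam : ℝ) (α q Q : Fin m → ℝ) (s : Fin m → ℝ) : Prop :=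
  (∀ i, s i ∈ Set.Icc (q i) (Q i)) ∧
  ∀ i : Fin m, ∀ x ∈ Set.Icc (q i) (Q i),
    payH m lam α (Function.update s i x) i ≤ payH m lam α s i

lemma aux_clear (c x l r : ℝ) (hr : r ≠ 0) :
    c * (2 * (x - l / r)) * r = c * (2 * r * x - 2 * l) := by
  have h : l / r * r = l := div_mul_cancel₀ _ hr
  calc c * (2 * (x - l / r)) * r = c * (2 * r * x - 2 * (l / r * r)) := by ring
    _ = c * (2 * r * x - 2 * l) := by rw [h]

/-- clamp is the unique minimizer of distance to `v` on `[q,Q]`. -/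
lemma eq_clamp_of_sq_min (q Q v s : ℝ) (hq : q ≤ s) (hQ : s ≤ Q)
    (h : ∀ x, q ≤ x → x ≤ Q → (s - v)^2 ≤ (x - v)^2) :
    s = max q (min Q v) := by
  rcases le_or_gt v q with hvq | hvq
  · have h1 := h q le_rfl (hq.trans hQ)
    have hs : s = q := by nlinarith
    rw [hs, max_eq_left ((min_le_right Q v).trans hvq)]
  · rcases le_or_gt v Q with hvQ | hvQ
    · have h1 := h v hvq.le hvQ
      have hs : s = v := by nlinarith
      rw [hs, min_eq_right hvQ, max_eq_right hvq.le]
    · have h1 := h Q (hq.trans hQ) le_rfl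
      have hs : s = Q := by nlinarith
      rw [hs, min_eq_left hvQ.le, max_eq_right (hq.trans hQ)]

lemma clamp_lipschitz (q Q a b : ℝ) :
    |max q (min Q a) - max q (min Q b)| ≤ |a - b| := by
  rw [max_comm q (min Q a), max_comm q (min Q b)]
  have h1 : |max (min Q a) q - max (min Q b) q| ≤ |min Q a - min Q b| :=
    abs_max_sub_max_le_abs _ _ _
  have h2 : |min Q a - min Q b| ≤ max |Q - Q| |a - b| := abs_min_sub_min_le_max _ _ _ _
  simp only [sub_self, abs_zero] at h2
  calc |max (min Q a) q - max (min Q b) q| ≤ |min Q a - min Q b| := h1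
    _ ≤ max 0 |a - b| := h2
    _ = |a - b| := max_eq_right (abs_nonneg _)

/-- payoff of `i` after updating coordinate `i`, in terms of the other-players sum. -/
lemma payH_update (m : ℕ) (lam : ℝ) (α s : Fin m → ℝ) (i : Fin m) (x : ℝ) :
    payH m lam α (Function.update s i x) i
      = lam / (m : ℝ) * ((∑ j ∈ univ.erase i, s j) + x) * x - α i * x ^ 2 := by
  have hsum : ∑ j, Function.update s i x j = x + ∑ j ∈ univ.erase i, s j := by
    rw [Finset.sum_update_of_mem (mem_univ i), Finset.erase_eq]
  simp only [payH, hsum, Function.update_self]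
  ring

lemma payH_self (m : ℕ) (lam : ℝ) (α s : Fin m → ℝ) (i : Fin m) :
    payH m lam α s i
      = lam / (m : ℝ) * ((∑ j ∈ univ.erase i, s j) + s i) * s i - α i * (s i) ^ 2 := by
  have hsum : ∑ j, s j = s i + ∑ j ∈ univ.erase i, s j :=
    (Finset.add_sum_erase univ s (mem_univ i)).symm
  simp only [payH, hsum]
  ring

/-- At a NE, each component is the clamped vertex of the best-response quadratic. -/
lemma NE_component (m : ℕ) (lam : ℝ) (α q Q s : Fin m → ℝ) (i : Fin m)
    (ha : 0 < α i - lam / (m : ℝ))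
    (hNE : isNE m lam α q Q s) :
    s i = max (q i) (min (Q i)
      (lam / (m : ℝ) * (∑ j ∈ univ.erase i, s j) / (2 * (α i - lam / (m : ℝ))))) := by
  set T := ∑ j ∈ univ.erase i, s j with hT
  set a := α i - lam / (m : ℝ) with haa
  set v := lam / (m : ℝ) * T / (2 * a) with hv
  have h2a : (2 * a) ≠ 0 := by positivity
  have hveq : 2 * a * v = lam / (m : ℝ) * T := by
    rw [hv, mul_comm, div_mul_cancel₀ _ h2a]
  have hkey : ∀ y : ℝ, lam / (m : ℝ) * (T + y) * y - α i * y ^ 2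
      = a * v ^ 2 - a * (y - v) ^ 2 := by
    intro y
    calc lam / (m : ℝ) * (T + y) * y - α i * y ^ 2
        = (lam / (m : ℝ) * T) * y - a * y ^ 2 := by rw [haa]; ring
      _ = (2 * a * v) * y - a * y ^ 2 := by rw [hveq]
      _ = a * v ^ 2 - a * (y - v) ^ 2 := by ring
  apply eq_clamp_of_sq_min _ _ _ _ (hNE.1 i).1 (hNE.1 i).2
  intro x hx1 hx2
  have hle := hNE.2 i x ⟨hx1, hx2⟩
  rw [payH_update, payH_self, ← hT, hkey, hkey] at hle
  nlinarith [hle, ha]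

set_option maxHeartbeats 1000000 in
theorem homFL_NE_between_activation_and_jump
    (m : ℕ) (hm : 1 ≤ m) (α q Q : Fin m → ℝ)
    (hα : ∀ i, 0 < α i) (hq : ∀ i, 0 < q i) (hqQ : ∀ i, q i ≤ Q i)
    (αmin : ℝ) (hαmin : IsLeast (Set.range α) αmin)
    (lamstar : ℝ) (hlamstar : lamstar ∈ Set.Ioo 0 ((m : ℝ) * αmin))
    (hlseq : ∑ i, lamstar / (2 * (m : ℝ) * α i - lamstar) = 1)
    (c₁ : ℝ)
    (hc₁ : IsGreatest (Set.range fun i => 2 * α i * q i / lamstar - q i / (m : ℝ)) c₁)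
    (qbar : ℝ) (hqbar : qbar = (∑ i, q i) / (m : ℝ))
    (lam₁ : ℝ)
    (hlam₁ : IsLeast (Set.range fun i => 2 * (α i * q i / (qbar + q i / (m : ℝ)))) lam₁)
    (lam : ℝ) (hlam : lam ∈ Set.Ioo lam₁ lamstar) :
    (∃! s : Fin m → ℝ, isNE m lam α q Q s) ∧
    ∀ s : Fin m → ℝ, isNE m lam α q Q s → (∑ i, s i) / (m : ℝ) < c₁ := by
  have hmpos : (0 : ℝ) < m := by exact_mod_cast hm
  have hm' : (m : ℝ) ≠ 0 := ne_of_gt hmpos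
  have hne : Nonempty (Fin m) := ⟨⟨0, hm⟩⟩
  have huniv : (univ : Finset (Fin m)).Nonempty := univ_nonempty
  have hqbarpos : 0 < qbar := by
    rw [hqbar]
    exact div_pos (Finset.sum_pos (fun i _ => hq i) huniv) hmpos
  have hlam1pos : 0 < lam₁ := by
    obtain ⟨i, hi⟩ := hlam₁.1
    have hd : 0 < qbar + q i / (m : ℝ) :=
      add_pos_of_pos_of_nonneg hqbarpos (div_nonneg (hq i).le (Nat.cast_nonneg m))
    have : 0 < 2 * (α i * q i / (qbar + q i / (m : ℝ))) := by
      have := div_pos (mul_pos (hα i) (hq i)) hd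
      linarith
    simpa [hi] using this
  have hlam0 : 0 < lam := hlam1pos.trans hlam.1
  have hαminle : ∀ i, αmin ≤ α i := fun i => hαmin.2 (Set.mem_range_self i)
  have hlamlt : ∀ i, lam < (m : ℝ) * α i := fun i =>
    hlam.2.trans (hlamstar.2.trans_le (by nlinarith [hαminle i]))
  have ha : ∀ i, 0 < α i - lam / (m : ℝ) := by
    intro i
    rw [sub_pos, div_lt_iff₀ hmpos]
    nlinarith [hlamlt i]
  have hden : ∀ i, 0 < 2 * (m : ℝ) * α i - lamstar := by
    intro i
    nlinarith [hαminle i, hlamstar.2, hα i, hlamstar.1]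
  have hdenlam : ∀ i, 0 < 2 * (m : ℝ) * α i - lam := by
    intro i
    have := hden i
    have := hlam.2
    linarith
  have httlt : ∀ i, lam / (2 * (m : ℝ) * α i - lam)
      < lamstar / (2 * (m : ℝ) * α i - lamstar) := by
    intro i
    rw [div_lt_div_iff₀ (hdenlam i) (hden i)]
    nlinarith [hlam.2, mul_pos hmpos (hα i)]
  have hsigma : ∑ i, lam / (2 * (m : ℝ) * α i - lam) < 1 := by
    rw [← hlseq]
    exact Finset.sum_lt_sum_of_nonempty huniv fun i _ => httlt i
  have hclamp : ∀ s, isNE m lam α q Q s → ∀ i,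
      s i = max (q i) (min (Q i)
        (lam / (m : ℝ) * (∑ j ∈ univ.erase i, s j) / (2 * (α i - lam / (m : ℝ))))) :=
    fun s hs i => NE_component m lam α q Q s i (ha i) hs
  -- Existence via the exact potential Φ
  have hexists : ∃ s, isNE m lam α q Q s := by
    set Φ : (Fin m → ℝ) → ℝ := fun s =>
      lam / (2 * (m : ℝ)) * (∑ j, s j) ^ 2
        + ∑ j, (lam / (2 * (m : ℝ)) - α j) * (s j) ^ 2 with hΦ
    have hK : IsCompact (Set.univ.pi fun i => Set.Icc (q i) (Q i)) :=
      isCompact_univ_pi fun i => isCompact_Icc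
    have hKne : (Set.univ.pi fun i => Set.Icc (q i) (Q i)).Nonempty :=
      ⟨q, fun i _ => ⟨le_rfl, hqQ i⟩⟩
    have hcont : ContinuousOn Φ (Set.univ.pi fun i => Set.Icc (q i) (Q i)) := by
      apply Continuous.continuousOn
      fun_prop
    obtain ⟨s, hsK, hsmax⟩ := hK.exists_isMaxOn hKne hcont
    refine ⟨s, fun i => hsK i (Set.mem_univ i), ?_⟩
    intro i x hx
    have hmem : Function.update s i x ∈ Set.univ.pi fun i => Set.Icc (q i) (Q i) := by
      intro j _
      rcases eq_or_ne j i with rfl | hji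
      · rwa [Function.update_self]
      · rw [Function.update_of_ne hji]; exact hsK j (Set.mem_univ j)
    have hΦle : Φ (Function.update s i x) ≤ Φ s := hsmax hmem
    have key : payH m lam α (Function.update s i x) i - payH m lam α s i
        = Φ (Function.update s i x) - Φ s := by
      have hsum : ∑ j, Function.update s i x j = x + ∑ j ∈ univ.erase i, s j := by
        rw [Finset.sum_update_of_mem (mem_univ i), Finset.erase_eq]
      have hsum2 : ∑ j, s j = s i + ∑ j ∈ univ.erase i, s j :=
        (Finset.add_sum_erase univ s (mem_univ i)).symm
      have hsq : ∑ j, (lam / (2 * (m : ℝ)) - α j) * (Function.update s i x j) ^ 2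
          = (lam / (2 * (m : ℝ)) - α i) * x ^ 2
            + ∑ j ∈ univ.erase i, (lam / (2 * (m : ℝ)) - α j) * (s j) ^ 2 := by
        have heq : (fun j => (lam / (2 * (m : ℝ)) - α j) * (Function.update s i x j) ^ 2)
            = Function.update (fun j => (lam / (2 * (m : ℝ)) - α j) * (s j) ^ 2) i
              ((lam / (2 * (m : ℝ)) - α i) * x ^ 2) := by
          funext j
          rcases eq_or_ne j i with rfl | hji
          · simp [Function.update_self]
          · simp [Function.update_of_ne hji]
        rw [heq, Finset.sum_update_of_mem (mem_univ i), Finset.erase_eq]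
      have hsq2 : ∑ j, (lam / (2 * (m : ℝ)) - α j) * (s j) ^ 2
          = (lam / (2 * (m : ℝ)) - α i) * (s i) ^ 2
            + ∑ j ∈ univ.erase i, (lam / (2 * (m : ℝ)) - α j) * (s j) ^ 2 :=
        (Finset.add_sum_erase univ _ (mem_univ i)).symm
      rw [payH_update, payH_self, hΦ]
      simp only [hsum, hsum2, hsq, hsq2]
      field_simp
      ring
    linarith [key, hΦle]
  -- uniqueness
  have huniq : ∀ s t, isNE m lam α q Q s → isNE m lam α q Q t → s = t := by
    intro s t hs ht
    set U := ∑ j, |s j - t j| with hU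
    have hui : ∀ i, |s i - t i| ≤ lam / (2 * (m : ℝ) * α i - lam) * U := by
      intro i
      have hai := ha i
      have h2a : (0:ℝ) < 2 * (α i - lam / (m : ℝ)) := by linarith
      have h1 : |s i - t i|
          ≤ |lam / (m : ℝ) * (∑ j ∈ univ.erase i, s j) / (2 * (α i - lam / (m : ℝ)))
              - lam / (m : ℝ) * (∑ j ∈ univ.erase i, t j) / (2 * (α i - lam / (m : ℝ)))| := by
        rw [hclamp s hs i, hclamp t ht i]
        exact clamp_lipschitz _ _ _ _
      have h2 : |lam / (m : ℝ) * (∑ j ∈ univ.erase i, s j) / (2 * (α i - lam / (m : ℝ)))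
              - lam / (m : ℝ) * (∑ j ∈ univ.erase i, t j) / (2 * (α i - lam / (m : ℝ)))|
          = lam / (m : ℝ) / (2 * (α i - lam / (m : ℝ)))
              * |∑ j ∈ univ.erase i, (s j - t j)| := by
        rw [Finset.sum_sub_distrib]
        rw [← abs_of_pos (show (0:ℝ) < lam / (m : ℝ) / (2 * (α i - lam / (m : ℝ))) from
          div_pos (div_pos hlam0 hmpos) h2a), ← abs_mul]
        congr 1
        field_simp
      have h3 : |∑ j ∈ univ.erase i, (s j - t j)| ≤ ∑ j ∈ univ.erase i, |s j - t j| :=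
        Finset.abs_sum_le_sum_abs _ _
      have h4 : ∑ j ∈ univ.erase i, |s j - t j| = U - |s i - t i| := by
        rw [hU, ← Finset.add_sum_erase univ _ (mem_univ i)]
        ring
      have hbound : |s i - t i|
          ≤ lam / (m : ℝ) / (2 * (α i - lam / (m : ℝ))) * (U - |s i - t i|) := by
        refine (h1.trans_eq h2).trans ?_
        exact mul_le_mul_of_nonneg_left (h3.trans_eq h4)
          (div_nonneg (div_nonneg hlam0.le hmpos.le) h2a.le)
      have hb2 : |s i - t i| * (2 * (α i - lam / (m : ℝ)))
          ≤ lam / (m : ℝ) * (U - |s i - t i|) := by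
        have h5 := mul_le_mul_of_nonneg_right hbound h2a.le
        calc |s i - t i| * (2 * (α i - lam / (m : ℝ)))
            ≤ lam / (m : ℝ) / (2 * (α i - lam / (m : ℝ))) * (U - |s i - t i|)
                * (2 * (α i - lam / (m : ℝ))) := h5
          _ = lam / (m : ℝ) * (U - |s i - t i|) := by
              rw [mul_right_comm, div_mul_cancel₀ _ (ne_of_gt h2a)]
      have hb3 : |s i - t i| * (2 * (m : ℝ) * α i - lam) ≤ lam * U := by
        have h6 := mul_le_mul_of_nonneg_right hb2 hmpos.le
        have e1 : lam / (m : ℝ) * (U - |s i - t i|) * (m : ℝ)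
            = lam * (U - |s i - t i|) := by
          rw [mul_right_comm, div_mul_cancel₀ _ hm']
        have e2 : |s i - t i| * (2 * (α i - lam / (m : ℝ))) * (m : ℝ)
            = |s i - t i| * (2 * (m : ℝ) * α i - 2 * lam) := aux_clear _ _ _ _ hm'
        rw [e1, e2] at h6
        nlinarith [abs_nonneg (s i - t i), hlam0]
      rw [div_mul_eq_mul_div, le_div_iff₀ (hdenlam i)]
      linarith
    have hUle : U ≤ (∑ i, lam / (2 * (m : ℝ) * α i - lam)) * U := by
      rw [Finset.sum_mul]
      calc U = ∑ j, |s j - t j| := hU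
        _ ≤ ∑ i, lam / (2 * (m : ℝ) * α i - lam) * U := Finset.sum_le_sum fun i _ => hui i
    have hUnn : 0 ≤ U := Finset.sum_nonneg fun i _ => abs_nonneg _
    have hU0 : U = 0 := by
      by_contra h
      have hpos : 0 < U := lt_of_le_of_ne hUnn (Ne.symm h)
      have hlt := mul_lt_mul_of_pos_right hsigma hpos
      rw [one_mul] at hlt
      linarith
    funext i
    have h7 : |s i - t i| = 0 :=
      (Finset.sum_eq_zero_iff_of_nonneg
        (fun j (_ : j ∈ univ) => abs_nonneg (s j - t j))).mp hU0 i (mem_univ i)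
    have := abs_eq_zero.mp h7
    linarith
  -- the bound
  have hbound : ∀ s : Fin m → ℝ, isNE m lam α q Q s → (∑ i, s i) / (m : ℝ) < c₁ := by
    intro s hs
    set S := ∑ j, s j with hS
    have hSpos : 0 < S := Finset.sum_pos (fun i _ => (hq i).trans_le (hs.1 i).1) huniv
    have hSerase : ∀ i, ∑ j ∈ univ.erase i, s j = S - s i := by
      intro i
      rw [hS, ← Finset.add_sum_erase univ s (mem_univ i)]
      ring
    by_contra hcon
    push_neg at hcon
    have hqstar : ∀ i, q i ≤ lamstar / (2 * (m : ℝ) * α i - lamstar) * S := by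
      intro i
      have h := (hc₁.2 (Set.mem_range_self i)).trans hcon
      rw [div_sub_div _ _ (ne_of_gt hlamstar.1) hm',
        div_le_div_iff₀ (mul_pos hlamstar.1 hmpos) hmpos] at h
      rw [div_mul_eq_mul_div, le_div_iff₀ (hden i)]
      nlinarith [h, hmpos]
    have hlev : ∀ i, q i < lam / (m : ℝ) * (S - s i) / (2 * (α i - lam / (m : ℝ))) →
        s i ≤ lam / (2 * (m : ℝ) * α i - lam) * S := by
      intro i hvi
      have hai := ha i
      have h2a : (0:ℝ) < 2 * (α i - lam / (m : ℝ)) := by linarith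
      have hsv : s i ≤ lam / (m : ℝ) * (S - s i) / (2 * (α i - lam / (m : ℝ))) := by
        have hcl := hclamp s hs i
        rw [hSerase i] at hcl
        conv_lhs => rw [hcl]
        exact max_le hvi.le (min_le_right _ _)
      rw [le_div_iff₀ h2a] at hsv
      have h6 := mul_le_mul_of_nonneg_right hsv hmpos.le
      have e1 : lam / (m : ℝ) * (S - s i) * (m : ℝ) = lam * (S - s i) := by
        rw [mul_right_comm, div_mul_cancel₀ _ hm']
      have e2 : s i * (2 * (α i - lam / (m : ℝ))) * (m : ℝ)
          = s i * (2 * (m : ℝ) * α i - 2 * lam) := aux_clear _ _ _ _ hm'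
      rw [e1, e2] at h6
      rw [div_mul_eq_mul_div, le_div_iff₀ (hdenlam i)]
      nlinarith [h6]
    by_cases hall : ∀ i, lam / (m : ℝ) * (S - s i) / (2 * (α i - lam / (m : ℝ))) ≤ q i
    · -- every client at its lower bound: contradicts lam₁ < lam
      have hsq : ∀ i, s i = q i := by
        intro i
        have hcl := hclamp s hs i
        rw [hSerase i] at hcl
        rw [hcl]
        exact max_eq_left ((min_le_right _ _).trans (hall i))
      obtain ⟨i, hi⟩ := hlam₁.1
      have hvle := hall i
      rw [hsq i] at hvle
      have h2a : (0:ℝ) < 2 * (α i - lam / (m : ℝ)) := by linarith [ha i]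
      rw [div_le_iff₀ h2a] at hvle
      have h6 := mul_le_mul_of_nonneg_right hvle hmpos.le
      have e1 : lam / (m : ℝ) * (S - q i) * (m : ℝ) = lam * (S - q i) := by
        rw [mul_right_comm, div_mul_cancel₀ _ hm']
      have e2 : q i * (2 * (α i - lam / (m : ℝ))) * (m : ℝ)
          = 2 * (m : ℝ) * α i * q i - 2 * lam * q i := by
        rw [aux_clear _ _ _ _ hm']; ring
      rw [e1, e2] at h6
      have h7 : lam * S + lam * q i ≤ 2 * (m : ℝ) * α i * q i := by linarith
      have hSq : S = ∑ j, q j := by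
        rw [hS]; exact Finset.sum_congr rfl fun j _ => hsq j
      have hqbar' : qbar = S / (m : ℝ) := by rw [hqbar, hSq]
      have hdpos : 0 < qbar + q i / (m : ℝ) :=
        add_pos hqbarpos (div_pos (hq i) hmpos)
      have hlam1eq : lam₁ * (qbar + q i / (m : ℝ)) = 2 * (α i * q i) := by
        rw [← hi, mul_assoc, div_mul_cancel₀ _ (ne_of_gt hdpos)]
      have hexp : (qbar + q i / (m : ℝ)) * (m : ℝ) = S + q i := by
        rw [hqbar', ← add_div, div_mul_cancel₀ _ hm']
      have h8 : lam₁ * (S + q i) = 2 * (m : ℝ) * α i * q i := by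
        calc lam₁ * (S + q i) = lam₁ * ((qbar + q i / (m : ℝ)) * (m : ℝ)) := by rw [hexp]
          _ = lam₁ * (qbar + q i / (m : ℝ)) * (m : ℝ) := by ring
          _ = 2 * (α i * q i) * (m : ℝ) := by rw [hlam1eq]
          _ = 2 * (m : ℝ) * α i * q i := by ring
      have hSqpos : 0 < S + q i := add_pos hSpos (hq i)
      nlinarith [hlam.1, h7, h8, hSqpos]
    · push_neg at hall
      obtain ⟨j, hj⟩ := hall
      have hsle : ∀ i ∈ (univ : Finset (Fin m)),
          s i ≤ lamstar / (2 * (m : ℝ) * α i - lamstar) * S := by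
        intro i _
        rcases le_or_gt (lam / (m : ℝ) * (S - s i) / (2 * (α i - lam / (m : ℝ)))) (q i)
          with h | h
        · have hcl := hclamp s hs i
          rw [hSerase i] at hcl
          have hsiq : s i = q i := by
            rw [hcl]; exact max_eq_left ((min_le_right _ _).trans h)
          rw [hsiq]; exact hqstar i
        · exact (hlev i h).trans
            (mul_le_mul_of_nonneg_right (httlt i).le hSpos.le)
      have hjlt : s j < lamstar / (2 * (m : ℝ) * α j - lamstar) * S :=
        (hlev j hj).trans_lt (mul_lt_mul_of_pos_right (httlt j) hSpos)
      have hlt : S < ∑ i, lamstar / (2 * (m : ℝ) * α i - lamstar) * S := by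
        calc S = ∑ i, s i := hS
          _ < _ := Finset.sum_lt_sum hsle ⟨j, mem_univ j, hjlt⟩
      rw [← Finset.sum_mul, hlseq, one_mul] at hlt
      exact lt_irrefl _ hlt
  obtain ⟨s₀, hs₀⟩ := hexists
  exact ⟨⟨s₀, hs₀, fun t ht => huniq t s₀ ht hs₀⟩, hbound⟩
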